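/- arXiv:1211.2709 — 2 statements merged into one kernel-verified Lean document; each statement's English description precedes it below -/
import Mathlib

section
/- Let L, M : ℝ × ℝ → ℝ be differentiable functions and let M_S > 0 be a constant. Let Y₀ ∈ ℝ and let r : ℝ → ℝ be differentiable at Y₀ with r(Y₀) = R₀, and suppose L(Y, r(Y)) = M(Y, r(Y)) + M_S for all Y in a neighborhood of Y₀. If at the point (Y₀, R₀) the partial derivatives satisfy 0 < ∂M/∂Y < ∂L/∂Y, ∂L/∂R > 0 and ∂M/∂R < 0 (the liquidity-trap phase), then the derivative of r at Y₀ is strictly negative; i.e. the middle arc of the S-bent LM curve is strictly decreasing. -/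
open Filter Topology Set

/-- In the liquidity-trap phase (`∂L/∂R > 0`, `∂M/∂R < 0`, with the usual income
properties `0 < ∂M/∂Y < ∂L/∂Y`), the middle arc of the S-bent LM curve
(locally parametrized as `R = r(Y)`) is strictly decreasing. -/
theorem lm_curve_strictly_decreasing_liquidity_trap
    (L M : ℝ × ℝ → ℝ) (hL : Differentiable ℝ L) (hM : Differentiable ℝ M)
    (M_S : ℝ) (hMS : 0 < M_S)
    (Y₀ R₀ : ℝ) (r : ℝ → ℝ)
    (hr : DifferentiableAt ℝ r Y₀) (hrY₀ : r Y₀ = R₀)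
    (heq : ∀ᶠ Y in 𝓝 Y₀, L (Y, r Y) = M (Y, r Y) + M_S)
    (hMY : 0 < fderiv ℝ M (Y₀, R₀) (1, 0))
    (hMYLY : fderiv ℝ M (Y₀, R₀) (1, 0) < fderiv ℝ L (Y₀, R₀) (1, 0))
    (hLR : 0 < fderiv ℝ L (Y₀, R₀) (0, 1))
    (hMR : fderiv ℝ M (Y₀, R₀) (0, 1) < 0) :
    deriv r Y₀ < 0 := by
  set d := deriv r Y₀ with hd
  have hg : HasDerivAt (fun Y : ℝ => (Y, r Y)) (1, d) Y₀ :=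
    HasDerivAt.prodMk (hasDerivAt_id Y₀) hr.hasDerivAt
  have hgY : (Y₀, r Y₀) = (Y₀, R₀) := by rw [hrY₀]
  have hfL : HasFDerivAt L (fderiv ℝ L (Y₀, R₀)) (Y₀, r Y₀) := by
    rw [hrY₀]; exact (hL _).hasFDerivAt
  have hfM : HasFDerivAt M (fderiv ℝ M (Y₀, R₀)) (Y₀, r Y₀) := by
    rw [hrY₀]; exact (hM _).hasFDerivAt
  have hLd : HasDerivAt (fun Y => L (Y, r Y)) (fderiv ℝ L (Y₀, R₀) (1, d)) Y₀ :=
    hfL.comp_hasDerivAt Y₀ hg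
  have hMd : HasDerivAt (fun Y => M (Y, r Y)) (fderiv ℝ M (Y₀, R₀) (1, d)) Y₀ :=
    hfM.comp_hasDerivAt Y₀ hg
  have hsub : HasDerivAt (fun Y => L (Y, r Y) - M (Y, r Y))
      (fderiv ℝ L (Y₀, R₀) (1, d) - fderiv ℝ M (Y₀, R₀) (1, d)) Y₀ := hLd.sub hMd
  have hconst : (fun Y => L (Y, r Y) - M (Y, r Y)) =ᶠ[𝓝 Y₀] fun _ => M_S :=
    heq.mono fun Y h => by show L (Y, r Y) - M (Y, r Y) = M_S; rw [h]; ring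
  have h0 : HasDerivAt (fun _ : ℝ => M_S)
      (fderiv ℝ L (Y₀, R₀) (1, d) - fderiv ℝ M (Y₀, R₀) (1, d)) Y₀ :=
    hsub.congr_of_eventuallyEq hconst.symm
  have hz : fderiv ℝ L (Y₀, R₀) (1, d) - fderiv ℝ M (Y₀, R₀) (1, d) = 0 := by
    have h1 := h0.deriv
    simpa using h1.symm
  have hdecL : fderiv ℝ L (Y₀, R₀) (1, d)
      = fderiv ℝ L (Y₀, R₀) (1, 0) + d * fderiv ℝ L (Y₀, R₀) (0, 1) := by
    have : ((1 : ℝ), d) = (1, 0) + d • ((0 : ℝ), (1 : ℝ)) := by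
      simp [Prod.ext_iff]
    rw [this, map_add, map_smul, smul_eq_mul]
  have hdecM : fderiv ℝ M (Y₀, R₀) (1, d)
      = fderiv ℝ M (Y₀, R₀) (1, 0) + d * fderiv ℝ M (Y₀, R₀) (0, 1) := by
    have : ((1 : ℝ), d) = (1, 0) + d • ((0 : ℝ), (1 : ℝ)) := by
      simp [Prod.ext_iff]
    rw [this, map_add, map_smul, smul_eq_mul]
  rw [hdecL, hdecM] at hz
  nlinarith [hz, hMY, hMYLY, hLR, hMR]
end

section
/- Let f : ℝ → ℝ be continuous on [0,∞) and let 0 < P < Q. Suppose f is strictly decreasing on [0,P], strictly increasing on [P,Q], and strictly decreasing on [Q,∞). If f(0) > 0, f(P) > 0, and f(x) → −∞ as x → ∞, then the set { x ∈ [0,∞) | f(x) = 0 } has exactly one element, and this element lies in (Q,∞). -/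
open Filter Topology Set

/-- For aggregate income outside the interval between the bifurcation values
(here: `f 0 > 0`, `f P > 0` and `f → −∞` at infinity), the excess-demand
function has exactly one zero on `[0,∞)`, and this zero lies in `(Q,∞)`. -/
theorem exactly_one_stationary_point
    (f : ℝ → ℝ) (P Q : ℝ) (hP : 0 < P) (hPQ : P < Q)
    (hc : ContinuousOn f (Ici 0))
    (h₁ : StrictAntiOn f (Icc 0 P))
    (h₂ : StrictMonoOn f (Icc P Q))
    (h₃ : StrictAntiOn f (Ici Q))
    (hf0 : 0 < f 0) (hfP : 0 < f P)
    (hbot : Tendsto f atTop atBot) :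
    ∃ x : ℝ, Q < x ∧ {y : ℝ | 0 ≤ y ∧ f y = 0} = {x} := by
  have hQ0 : (0:ℝ) < Q := hP.trans hPQ
  have hfQ : 0 < f Q := hfP.trans (h₂ ⟨le_refl P, hPQ.le⟩ ⟨hPQ.le, le_refl Q⟩ hPQ)
  -- find a point where f is negative
  obtain ⟨R, hR⟩ := (hbot.eventually (eventually_lt_atBot (0:ℝ))).exists_forall_of_atTop
  set R' := max R (Q + 1) with hR'
  have hQR : Q < R' := lt_of_lt_of_le (lt_add_one Q) (le_max_right _ _)
  have hfR : f R' < 0 := hR R' (le_max_left _ _)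
  -- IVT on [Q, R']
  have hsub : Icc Q R' ⊆ Ici 0 := fun z hz => le_trans hQ0.le hz.1
  have hivt := intermediate_value_Ioo' (α := ℝ) hQR.le (hc.mono hsub)
  have h0mem : (0:ℝ) ∈ Ioo (f R') (f Q) := ⟨hfR, hfQ⟩
  obtain ⟨x, hx, hfx⟩ := hivt h0mem
  refine ⟨x, hx.1, ?_⟩
  ext y
  simp only [mem_setOf_eq, mem_singleton_iff]
  constructor
  · rintro ⟨hy0, hfy⟩
    -- y cannot be ≤ P
    have h1 : ¬ y ≤ P := by
      intro hyP
      have : f P ≤ f y := by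
        rcases eq_or_lt_of_le hyP with h | h
        · rw [h]
        · exact (h₁ ⟨hy0, hyP⟩ ⟨hP.le, le_refl P⟩ h).le
      linarith [hfP]
    push_neg at h1
    -- y cannot be ≤ Q
    have h2 : ¬ y ≤ Q := by
      intro hyQ
      have : f P < f y := h₂ ⟨le_refl P, hPQ.le⟩ ⟨h1.le, hyQ⟩ h1
      linarith
    push_neg at h2
    -- y > Q, use injectivity of f on Ici Q
    have := h₃.injOn h2.le hx.1.le (by rw [hfy, hfx])
    exact this
  · rintro rfl
    exact ⟨le_of_lt (hQ0.trans hx.1), hfx⟩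
end
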